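/- With the hexagon data of the counterexample, any 1-Lipschitz candidate value {S1,S2} at the origin forces S1 and S2 to lie strictly on opposite sides of each of the three perpendicular bisectors of the segments P1P4, P2P5, P3P6 — i.e., if G({S1,S2}, f(X)) < 1 for all X ∈ {A,B,C}, then for each of the three lines y=0, y=√3 x, y=-√3 x, the points S1 and S2 lie in different open half-planes. -/

import Mathlib

noncomputable def Gdist
    (p q : EuclideanSpace ℝ (Fin 2) × EuclideanSpace ℝ (Fin 2)) : ℝ :=
  min (Real.sqrt (‖p.1 - q.1‖ ^ 2 + ‖p.2 - q.2‖ ^ 2))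
      (Real.sqrt (‖p.1 - q.2‖ ^ 2 + ‖p.2 - q.1‖ ^ 2))

noncomputable def P1 : EuclideanSpace ℝ (Fin 2) := !₂[0, 1]
noncomputable def P2 : EuclideanSpace ℝ (Fin 2) := !₂[Real.sqrt 3 / 2, 1 / 2]
noncomputable def P3 : EuclideanSpace ℝ (Fin 2) := !₂[Real.sqrt 3 / 2, -(1 / 2)]
noncomputable def P4 : EuclideanSpace ℝ (Fin 2) := !₂[0, -1]
noncomputable def P5 : EuclideanSpace ℝ (Fin 2) := !₂[-(Real.sqrt 3 / 2), -(1 / 2)]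
noncomputable def P6 : EuclideanSpace ℝ (Fin 2) := !₂[-(Real.sqrt 3 / 2), 1 / 2]

lemma normsq_two (v : EuclideanSpace ℝ (Fin 2)) :
    ‖v‖ ^ 2 = (v 0) ^ 2 + (v 1) ^ 2 := by
  rw [EuclideanSpace.norm_eq, Real.sq_sqrt (by positivity)]
  simp [Fin.sum_univ_two, sq_abs]

lemma sub_apply' (v w : EuclideanSpace ℝ (Fin 2)) (i : Fin 2) :
    (v - w) i = v i - w i := rfl

lemma split_G {S1 S2 Q1 Q2 : EuclideanSpace ℝ (Fin 2)}
    (h : Gdist (S1, S2) (Q1, Q2) < 1) :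
    (‖S1 - Q1‖ ^ 2 < 1 ∧ ‖S2 - Q2‖ ^ 2 < 1) ∨
    (‖S1 - Q2‖ ^ 2 < 1 ∧ ‖S2 - Q1‖ ^ 2 < 1) := by
  unfold Gdist at h
  rcases min_lt_iff.mp h with h | h
  · left
    have h1 : ‖S1 - Q1‖ ^ 2 + ‖S2 - Q2‖ ^ 2 < 1 := by
      have := Real.sqrt_lt' (x := ‖S1 - Q1‖ ^ 2 + ‖S2 - Q2‖ ^ 2) (y := 1) one_pos
      rw [this] at h; linarith [h]
    constructor <;> nlinarith [sq_nonneg ‖S1 - Q1‖, sq_nonneg ‖S2 - Q2‖]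
  · right
    have h1 : ‖S1 - Q2‖ ^ 2 + ‖S2 - Q1‖ ^ 2 < 1 := by
      have := Real.sqrt_lt' (x := ‖S1 - Q2‖ ^ 2 + ‖S2 - Q1‖ ^ 2) (y := 1) one_pos
      rw [this] at h; linarith [h]
    constructor <;> nlinarith [sq_nonneg ‖S1 - Q2‖, sq_nonneg ‖S2 - Q1‖]

lemma s3 : Real.sqrt 3 ^ 2 = 3 := Real.sq_sqrt (by norm_num)

lemma ballP1 {S : EuclideanSpace ℝ (Fin 2)} (h : ‖S - P1‖ ^ 2 < 1) : 0 < S 1 := by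
  rw [normsq_two, sub_apply', sub_apply'] at h
  simp only [P1, PiLp.toLp_apply, Matrix.cons_val_zero, Matrix.cons_val_one, Matrix.head_cons] at h
  nlinarith [sq_nonneg (S 0), sq_nonneg (S 1)]

lemma ballP4 {S : EuclideanSpace ℝ (Fin 2)} (h : ‖S - P4‖ ^ 2 < 1) : S 1 < 0 := by
  rw [normsq_two, sub_apply', sub_apply'] at h
  simp only [P4, PiLp.toLp_apply, Matrix.cons_val_zero, Matrix.cons_val_one, Matrix.head_cons] at h
  nlinarith [sq_nonneg (S 0), sq_nonneg (S 1)]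

lemma ballP2 {S : EuclideanSpace ℝ (Fin 2)} (h : ‖S - P2‖ ^ 2 < 1) :
    -(Real.sqrt 3) * S 0 < S 1 := by
  rw [normsq_two, sub_apply', sub_apply'] at h
  simp only [P2, PiLp.toLp_apply, Matrix.cons_val_zero, Matrix.cons_val_one, Matrix.head_cons] at h
  nlinarith [sq_nonneg (S 0), sq_nonneg (S 1), s3]

lemma ballP5 {S : EuclideanSpace ℝ (Fin 2)} (h : ‖S - P5‖ ^ 2 < 1) :
    S 1 < -(Real.sqrt 3) * S 0 := by
  rw [normsq_two, sub_apply', sub_apply'] at h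
  simp only [P5, PiLp.toLp_apply, Matrix.cons_val_zero, Matrix.cons_val_one, Matrix.head_cons] at h
  nlinarith [sq_nonneg (S 0), sq_nonneg (S 1), s3]

lemma ballP3 {S : EuclideanSpace ℝ (Fin 2)} (h : ‖S - P3‖ ^ 2 < 1) :
    S 1 < Real.sqrt 3 * S 0 := by
  rw [normsq_two, sub_apply', sub_apply'] at h
  simp only [P3, PiLp.toLp_apply, Matrix.cons_val_zero, Matrix.cons_val_one, Matrix.head_cons] at h
  nlinarith [sq_nonneg (S 0), sq_nonneg (S 1), s3]

lemma ballP6 {S : EuclideanSpace ℝ (Fin 2)} (h : ‖S - P6‖ ^ 2 < 1) :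
    Real.sqrt 3 * S 0 < S 1 := by
  rw [normsq_two, sub_apply', sub_apply'] at h
  simp only [P6, PiLp.toLp_apply, Matrix.cons_val_zero, Matrix.cons_val_one, Matrix.head_cons] at h
  nlinarith [sq_nonneg (S 0), sq_nonneg (S 1), s3]

/-- If the value {S1,S2} at the origin is at Wasserstein distance < 1 from
each of f(A)={P1,P4}, f(B)={P2,P5}, f(C)={P3,P6}, then S1 and S2 lie strictly
on opposite sides of each of the lines y = 0, y = √3x, y = -√3x (the
perpendicular bisectors of P1P4, P2P5, P3P6). -/
theorem candidate_value_opposite_sectors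
    (S1 S2 : EuclideanSpace ℝ (Fin 2))
    (hA : Gdist (S1, S2) (P1, P4) < 1)
    (hB : Gdist (S1, S2) (P2, P5) < 1)
    (hC : Gdist (S1, S2) (P3, P6) < 1) :
    ((0 < S1 1 ∧ S2 1 < 0) ∨ (S1 1 < 0 ∧ 0 < S2 1)) ∧
    ((Real.sqrt 3 * S1 0 < S1 1 ∧ S2 1 < Real.sqrt 3 * S2 0) ∨
      (S1 1 < Real.sqrt 3 * S1 0 ∧ Real.sqrt 3 * S2 0 < S2 1)) ∧
    ((-(Real.sqrt 3) * S1 0 < S1 1 ∧ S2 1 < -(Real.sqrt 3) * S2 0) ∨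
      (S1 1 < -(Real.sqrt 3) * S1 0 ∧ -(Real.sqrt 3) * S2 0 < S2 1)) := by
  refine ⟨?_, ?_, ?_⟩
  · rcases split_G hA with ⟨h1, h2⟩ | ⟨h1, h2⟩
    · exact Or.inl ⟨ballP1 h1, ballP4 h2⟩
    · exact Or.inr ⟨ballP4 h1, ballP1 h2⟩
  · rcases split_G hC with ⟨h1, h2⟩ | ⟨h1, h2⟩
    · exact Or.inr ⟨ballP3 h1, ballP6 h2⟩
    · exact Or.inl ⟨ballP6 h1, ballP3 h2⟩
  · rcases split_G hB with ⟨h1, h2⟩ | ⟨h1, h2⟩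
    · exact Or.inl ⟨ballP2 h1, ballP5 h2⟩
    · exact Or.inr ⟨ballP5 h1, ballP2 h2⟩
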